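/- arXiv:2505.05249 — 4 statements merged into one kernel-verified Lean document; each statement's English description precedes it below -/
import Mathlib

section
/- (Corollary 1, Ancilla reuse after measure–reset.) For every matrix ρ on the full register A × M, the post-measurement-reset state factorizes as 𝓜 ρ = (Matrix.stdBasisMatrix x₀ x₀ 1) ⊗ₖ (∑ x : A, (K x) * ρ * (K x)ᴴ); that is, the ancillas are deterministically in the state |0⟩⟨0| and are unentangled from the main register. -/
open Matrix Kronecker

lemma lmul {A M : Type*} [Fintype A] [Fintype M] [DecidableEq A] [DecidableEq M]
    (x₀ x : A) (C : Matrix (A × M) (A × M) ℂ) (a : A) (i : M) (p : A × M) :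
    (((Matrix.single x₀ x (1 : ℂ)) ⊗ₖ (1 : Matrix M M ℂ)) * C) (a, i) p
      = if a = x₀ then C (x, i) p else 0 := by
  simp only [mul_apply, Fintype.sum_prod_type, kroneckerMap_apply, Matrix.single, of_apply,
    one_apply, ite_and]
  by_cases h : a = x₀
  · simp [h, eq_comm]
  · simp [h, Ne.symm h]

lemma rmul {A M : Type*} [Fintype A] [Fintype M] [DecidableEq A] [DecidableEq M]
    (x₀ x : A) (C : Matrix (A × M) (A × M) ℂ) (p : A × M) (b : A) (j : M) :
    (C * ((Matrix.single x₀ x (1 : ℂ)) ⊗ₖ (1 : Matrix M M ℂ))ᴴ) p (b, j)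
      = if b = x₀ then C p (x, j) else 0 := by
  simp only [mul_apply, conjTranspose_apply, Fintype.sum_prod_type, kroneckerMap_apply,
    Matrix.single, of_apply, one_apply, ite_and]
  by_cases h : b = x₀
  · simp [h, eq_comm, apply_ite (starRingEnd ℂ)]
  · simp [h, Ne.symm h, apply_ite (starRingEnd ℂ)]

/-- Corollary 1, Ancilla reuse after measure–reset: the
post-measurement-reset state factorizes with the ancillas deterministically in
`|0⟩⟨0|`, unentangled from the main register. -/
theorem measure_reset_factorizes {A M : Type*} [Fintype A] [Fintype M]
    [Nonempty A] [Nonempty M] [DecidableEq A] [DecidableEq M]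
    (x₀ : A)
    (U : Matrix (A × M) (A × M) ℂ) (hU : Uᴴ * U = 1)
    (K : A → Matrix M (A × M) ℂ)
    (hK : ∀ (x : A) (i : M) (y : A) (j : M), K x i (y, j) = U (x, i) (y, j))
    (E : A → Matrix (A × M) (A × M) ℂ)
    (hE : ∀ x : A, E x = (Matrix.single x₀ x (1 : ℂ)) ⊗ₖ (1 : Matrix M M ℂ))
    (𝓜 : Matrix (A × M) (A × M) ℂ → Matrix (A × M) (A × M) ℂ)
    (h𝓜 : ∀ ρ, 𝓜 ρ = ∑ x : A, E x * U * ρ * Uᴴ * (E x)ᴴ) :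
    ∀ ρ : Matrix (A × M) (A × M) ℂ,
      𝓜 ρ = (Matrix.single x₀ x₀ (1 : ℂ)) ⊗ₖ (∑ x : A, (K x) * ρ * (K x)ᴴ) := by
  intro ρ
  have hK' : ∀ (x : A) (i : M) (p : A × M), K x i p = U (x, i) p := fun x i p => hK x i p.1 p.2
  have hKρ : ∀ (x : A) (i j : M),
      ((K x) * ρ * (K x)ᴴ) i j = (U * ρ * Uᴴ) (x, i) (x, j) := by
    intro x i j
    simp [mul_apply, hK', conjTranspose_apply, Finset.mul_sum, Finset.sum_mul, mul_assoc]
  rw [h𝓜]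
  ext ⟨a, i⟩ ⟨b, j⟩
  have hterm : ∀ x : A, (E x * U * ρ * Uᴴ * (E x)ᴴ) (a, i) (b, j)
      = if b = x₀ then (if a = x₀ then (U * ρ * Uᴴ) (x, i) (x, j) else 0) else 0 := by
    intro x
    have h1 : E x * U * ρ * Uᴴ * (E x)ᴴ = (E x * (U * ρ * Uᴴ)) * (E x)ᴴ := by
      simp [mul_assoc]
    rw [h1, hE, rmul, lmul]
  simp only [Matrix.sum_apply, hterm, kroneckerMap_apply, Matrix.sum_apply,
    Finset.sum_ite_irrel, Finset.sum_const_zero, hKρ]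
  by_cases ha : a = x₀ <;> by_cases hb : b = x₀ <;>
    simp [ha, hb, Matrix.single, Ne.symm, Finset.mul_sum]
end

section
/- A single measure-and-reset layer applied to an ancilla-reset input acts on the main register as the Kraus channel of the main-system Kraus operators: for every σ : Matrix M M ℂ, Tr_anc (𝓜 ((Matrix.stdBasisMatrix x₀ x₀ 1) ⊗ₖ σ)) = ∑ x : A, (𝐀 x) * σ * (𝐀 x)ᴴ. -/
open Matrix Kronecker

/-- a single measure-and-reset layer applied to an ancilla-reset
input acts on the main register as the Kraus channel of the main-system Kraus
operators. -/
theorem single_layer_main_channel {A M : Type*} [Fintype A] [Fintype M]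
    [Nonempty A] [Nonempty M] [DecidableEq A] [DecidableEq M]
    (x₀ : A)
    (U : Matrix (A × M) (A × M) ℂ) (hU : Uᴴ * U = 1)
    (E : A → Matrix (A × M) (A × M) ℂ)
    (hE : ∀ x : A, E x = (Matrix.single x₀ x (1 : ℂ)) ⊗ₖ (1 : Matrix M M ℂ))
    (𝓜 : Matrix (A × M) (A × M) ℂ → Matrix (A × M) (A × M) ℂ)
    (h𝓜 : ∀ ρ, 𝓜 ρ = ∑ x : A, E x * U * ρ * Uᴴ * (E x)ᴴ)
    (TrAnc : Matrix (A × M) (A × M) ℂ → Matrix M M ℂ)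
    (hTrAnc : ∀ (τ : Matrix (A × M) (A × M) ℂ) (i j : M),
      TrAnc τ i j = ∑ a : A, τ (a, i) (a, j))
    (𝒜 : A → Matrix M M ℂ)
    (h𝒜 : ∀ (x : A) (i j : M), 𝒜 x i j = U (x, i) (x₀, j)) :
    ∀ σ : Matrix M M ℂ,
      TrAnc (𝓜 ((Matrix.single x₀ x₀ (1 : ℂ)) ⊗ₖ σ)) =
        ∑ x : A, (𝒜 x) * σ * (𝒜 x)ᴴ := by
  intro σ
  ext i j
  rw [hTrAnc]
  simp only [h𝓜, Matrix.sum_apply, Matrix.mul_apply, hE, Matrix.kroneckerMap_apply,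
    Matrix.conjTranspose_apply, Matrix.single, Matrix.one_apply, Matrix.of_apply,
    Fintype.sum_prod_type, Prod.mk.injEq, mul_ite, ite_mul, mul_one, one_mul, mul_zero,
    zero_mul, Finset.sum_ite_eq, Finset.sum_ite_eq', Finset.mem_univ, if_true,
    Finset.sum_ite_irrel, Finset.sum_const_zero, apply_ite (starRingEnd ℂ), _root_.map_one, _root_.map_zero, ite_and, apply_ite (star : ℂ → ℂ), star_zero, star_one, h𝒜]
end

section
/- (Lemma 2, Surrogate Descent, guaranteed-decrease form.) Suppose C > 0. Let θ, s ∈ E and ε, η ∈ ℝ with 0 ≤ ε ≤ ‖g θ‖ / 4, ‖s − g θ‖ ≤ ε, and 0 ≤ η ≤ 8 / (25 * C). Set θ' = θ − η • s. Then L θ' ≤ L θ − (η / 2) * ‖g θ‖^2. -/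
open Real

lemma descent_aux
    {E : Type*} [NormedAddCommGroup E] [InnerProductSpace ℝ E] [CompleteSpace E]
    (L : E → ℝ) (g : E → E) (hg : ∀ x : E, HasGradientAt L (g x) x)
    (C : NNReal) (hLip : LipschitzWith C g) (x v : E) :
    L (x + v) ≤ L x + inner ℝ (g x) v + (C : ℝ) / 2 * ‖v‖ ^ 2 := by
  set f : ℝ → ℝ := fun t => L (x + t • v) - t * inner ℝ (g x) v - (C : ℝ) / 2 * t ^ 2 * ‖v‖ ^ 2
    with hf
  have hderiv : ∀ t : ℝ, HasDerivAt f
      ((inner ℝ (g (x + t • v)) v : ℝ) - inner ℝ (g x) v - (C : ℝ) * t * ‖v‖ ^ 2) t := by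
    intro t
    have hcurve : HasDerivAt (fun t : ℝ => x + t • v) v t := by
      simpa using ((hasDerivAt_id t).smul_const v).const_add x
    have h1 : HasDerivAt (fun t : ℝ => L (x + t • v)) ((inner ℝ (g (x + t • v)) v : ℝ)) t := by
      have := (hasGradientAt_iff_hasFDerivAt.mp (hg (x + t • v))).comp_hasDerivAt t hcurve
      exact this
    have h2 : HasDerivAt (fun t : ℝ => t * (inner ℝ (g x) v : ℝ)) (inner ℝ (g x) v) t := by
      simpa using (hasDerivAt_id t).mul_const (inner ℝ (g x) v : ℝ)
    have h3 : HasDerivAt (fun t : ℝ => (C : ℝ) / 2 * t ^ 2 * ‖v‖ ^ 2)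
        ((C : ℝ) * t * ‖v‖ ^ 2) t := by
      have := ((hasDerivAt_pow 2 t).const_mul ((C : ℝ) / 2)).mul_const (‖v‖ ^ 2)
      exact this.congr_deriv (by push_cast; ring)
    exact (h1.sub h2).sub h3
  have hanti : AntitoneOn f (Set.Icc 0 1) := by
    apply antitoneOn_of_deriv_nonpos (convex_Icc 0 1)
    · have hd : Differentiable ℝ f := fun t => (hderiv t).differentiableAt
      exact hd.continuous.continuousOn
    · intro t ht
      exact (hderiv t).differentiableAt.differentiableWithinAt
    · intro t ht
      rw [interior_Icc] at ht
      rw [(hderiv t).deriv]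
      have ht0 : 0 ≤ t := le_of_lt ht.1
      have hCS : (inner ℝ (g (x + t • v)) v : ℝ) - inner ℝ (g x) v ≤
          ‖g (x + t • v) - g x‖ * ‖v‖ := by
        calc (inner ℝ (g (x + t • v)) v : ℝ) - inner ℝ (g x) v
            = inner ℝ (g (x + t • v) - g x) v := by rw [inner_sub_left]
          _ ≤ ‖g (x + t • v) - g x‖ * ‖v‖ := real_inner_le_norm _ _
      have hLb : ‖g (x + t • v) - g x‖ ≤ (C : ℝ) * (t * ‖v‖) := by
        have := hLip.dist_le_mul (x + t • v) x
        rw [dist_eq_norm] at this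
        simpa [norm_smul, abs_of_nonneg ht0, mul_assoc] using this
      nlinarith [norm_nonneg v, mul_le_mul_of_nonneg_right hLb (norm_nonneg v)]
  have := hanti (Set.left_mem_Icc.mpr zero_le_one) (Set.right_mem_Icc.mpr zero_le_one)
    zero_le_one
  simp only [hf] at this
  simp only [zero_smul, add_zero, zero_mul, one_smul, one_mul, one_pow, mul_one] at this
  nlinarith [this]

/-- Lemma 2, Surrogate Descent, guaranteed-decrease form. -/
theorem surrogate_descent_decrease
    {E : Type*} [NormedAddCommGroup E] [InnerProductSpace ℝ E] [CompleteSpace E]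
    (L : E → ℝ) (g : E → E) (hg : ∀ x : E, HasGradientAt L (g x) x)
    (C : NNReal) (hLip : LipschitzWith C g) (hC : 0 < (C : ℝ))
    (θ s : E) (ε η : ℝ)
    (hε0 : 0 ≤ ε) (hε : ε ≤ ‖g θ‖ / 4)
    (hs : ‖s - g θ‖ ≤ ε)
    (hη0 : 0 ≤ η) (hη : η ≤ 8 / (25 * (C : ℝ))) :
    L (θ - η • s) ≤ L θ - (η / 2) * ‖g θ‖ ^ 2 := by
  have key := descent_aux L g hg C hLip θ (-(η • s))
  rw [← sub_eq_add_neg] at key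
  set G := ‖g θ‖ with hG
  have hG0 : 0 ≤ G := norm_nonneg _
  have hinner : (inner ℝ (g θ) s : ℝ) ≥ G ^ 2 - G * ε := by
    have h1 : (inner ℝ (g θ) s : ℝ) = G ^ 2 + inner ℝ (g θ) (s - g θ) := by
      rw [inner_sub_right, real_inner_self_eq_norm_sq]; ring
    have h2 : (inner ℝ (g θ) (s - g θ) : ℝ) ≥ -(G * ε) := by
      have habs := abs_real_inner_le_norm (g θ) (s - g θ)
      have h4 : ‖g θ‖ * ‖s - g θ‖ ≤ G * ε := mul_le_mul_of_nonneg_left hs hG0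
      have := neg_abs_le (inner ℝ (g θ) (s - g θ) : ℝ)
      linarith
    linarith
  have hnorms : ‖s‖ ≤ G + ε := by
    calc ‖s‖ = ‖s - g θ + g θ‖ := by rw [sub_add_cancel]
      _ ≤ ‖s - g θ‖ + G := norm_add_le _ _
      _ ≤ ε + G := by linarith
      _ = G + ε := by ring
  have hinner' : (inner ℝ (g θ) (-(η • s)) : ℝ) = -(η * inner ℝ (g θ) s) := by
    rw [inner_neg_right, real_inner_smul_right]
  have hnorm' : ‖-(η • s)‖ = η * ‖s‖ := by
    rw [norm_neg, norm_smul, Real.norm_eq_abs, abs_of_nonneg hη0]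
  rw [hinner', hnorm'] at key
  -- now: L (θ - η•s) ≤ L θ - η ⟪gθ,s⟫ + C/2 η² ‖s‖²
  have hs54 : ‖s‖ ≤ 5 / 4 * G := by linarith
  have hi34 : (inner ℝ (g θ) s : ℝ) ≥ 3 / 4 * G ^ 2 := by nlinarith
  have hηC : η * (C : ℝ) ≤ 8 / 25 := by
    calc η * (C : ℝ) ≤ 8 / (25 * (C : ℝ)) * (C : ℝ) := mul_le_mul_of_nonneg_right hη hC.le
      _ = 8 / 25 := by field_simp
  have hns : 0 ≤ ‖s‖ := norm_nonneg _
  have hB : ‖s‖ ^ 2 ≤ 25 / 16 * G ^ 2 := by nlinarith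
  have hA : η * (3 / 4 * G ^ 2) ≤ η * inner ℝ (g θ) s := mul_le_mul_of_nonneg_left hi34 hη0
  have h1 : η * ‖s‖ ^ 2 ≤ η * (25 / 16 * G ^ 2) := mul_le_mul_of_nonneg_left hB hη0
  have h2 : (η * (C : ℝ)) * (η * ‖s‖ ^ 2) ≤ (8 / 25) * (η * (25 / 16 * G ^ 2)) :=
    mul_le_mul hηC h1 (mul_nonneg hη0 (sq_nonneg _)) (by norm_num)
  nlinarith [h2, hA]
end

section
/- (Theorem 2, monotone decrease and convergence of the loss.) Suppose C > 0 and L is bounded below: B ≤ L x for all x ∈ E. Let θ, s : ℕ → E and η, ε : ℕ → ℝ satisfy, for all t: θ (t+1) = θ t − η t • s t; ‖s t − g (θ t)‖ ≤ ε t; 0 ≤ ε t ≤ ‖g (θ t)‖ / 4; and 0 ≤ η t ≤ 8 / (25 * C). Then L (θ (t+1)) ≤ L (θ t) for all t, and there exists ℓ* ∈ ℝ such that the sequence t ↦ L (θ t) tends to ℓ* as t → ∞. -/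
open RealInnerProductSpace

lemma descent_lemma
    {E : Type*} [NormedAddCommGroup E] [InnerProductSpace ℝ E] [CompleteSpace E]
    (L : E → ℝ) (g : E → E) (hg : ∀ x : E, HasGradientAt L (g x) x)
    (C : NNReal) (hLip : LipschitzWith C g) (x v : E) :
    L (x + v) ≤ L x + ⟪g x, v⟫ + (C : ℝ) / 2 * ‖v‖ ^ 2 := by
  set h : ℝ → ℝ := fun t => L (x + t • v) - t * ⟪g x, v⟫ - (C : ℝ) / 2 * t ^ 2 * ‖v‖ ^ 2 with hh
  have hline : ∀ t : ℝ, HasDerivAt (fun t : ℝ => x + t • v) v t := by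
    intro t
    simpa using ((hasDerivAt_id t).smul_const v).const_add x
  have hφ : ∀ t : ℝ, HasDerivAt (fun t : ℝ => L (x + t • v)) ⟪g (x + t • v), v⟫ t := by
    intro t
    have := ((hg (x + t • v)).hasFDerivAt.comp_hasDerivAt t (hline t))
    simpa [InnerProductSpace.toDual_apply_apply, Function.comp_def] using this
  have hd : ∀ t : ℝ, HasDerivAt h
      (⟪g (x + t • v), v⟫ - ⟪g x, v⟫ - (C : ℝ) * t * ‖v‖ ^ 2) t := by
    intro t
    have h1 : HasDerivAt (fun t : ℝ => t * ⟪g x, v⟫) ⟪g x, v⟫ t := by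
      simpa using (hasDerivAt_id t).mul_const ⟪g x, v⟫
    have h2 : HasDerivAt (fun t : ℝ => (C : ℝ) / 2 * t ^ 2 * ‖v‖ ^ 2)
        ((C : ℝ) * t * ‖v‖ ^ 2) t := by
      have := (((hasDerivAt_pow 2 t).const_mul ((C : ℝ) / 2)).mul_const (‖v‖ ^ 2))
      refine this.congr_deriv ?_
      simp only [Nat.cast_ofNat, show (2 - 1 : ℕ) = 1 from rfl, pow_one]
      ring
    exact ((hφ t).sub h1).sub h2
  have hanti : AntitoneOn h (Set.Icc (0:ℝ) 1) := by
    apply antitoneOn_of_deriv_nonpos (convex_Icc 0 1)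
    · exact Continuous.continuousOn (by
        have : Differentiable ℝ h := fun t => (hd t).differentiableAt
        exact this.continuous)
    · intro t ht
      exact ((hd t).differentiableAt).differentiableWithinAt
    · intro t ht
      rw [interior_Icc] at ht
      rw [(hd t).deriv]
      have hb : ⟪g (x + t • v) - g x, v⟫ ≤ (C : ℝ) * t * ‖v‖ ^ 2 := by
        calc ⟪g (x + t • v) - g x, v⟫ ≤ ‖g (x + t • v) - g x‖ * ‖v‖ :=
              real_inner_le_norm _ _
          _ ≤ (C : ℝ) * ‖(x + t • v) - x‖ * ‖v‖ := by
              gcongr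
              exact hLip.norm_sub_le _ _
          _ = (C : ℝ) * t * ‖v‖ ^ 2 := by
              rw [add_sub_cancel_left, norm_smul, Real.norm_eq_abs,
                abs_of_pos ht.1]
              ring
      have := inner_sub_left (𝕜 := ℝ) (g (x + t • v)) (g x) v
      linarith [hb, this.symm.le, this.le]
  have := hanti (Set.left_mem_Icc.2 zero_le_one) (Set.right_mem_Icc.2 zero_le_one) zero_le_one
  simp only [hh, zero_smul, add_zero, one_smul, zero_mul, one_mul, one_pow] at this
  nlinarith [this]

/-- Theorem 2, monotone decrease and convergence of the loss. -/
theorem surrogate_loss_converges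
    {E : Type*} [NormedAddCommGroup E] [InnerProductSpace ℝ E] [CompleteSpace E]
    (L : E → ℝ) (g : E → E) (hg : ∀ x : E, HasGradientAt L (g x) x)
    (C : NNReal) (hLip : LipschitzWith C g) (hC : 0 < (C : ℝ))
    (B : ℝ) (hB : ∀ x : E, B ≤ L x)
    (θ s : ℕ → E) (η ε : ℕ → ℝ)
    (hθ : ∀ t : ℕ, θ (t + 1) = θ t - η t • s t)
    (hs : ∀ t : ℕ, ‖s t - g (θ t)‖ ≤ ε t)
    (hε0 : ∀ t : ℕ, 0 ≤ ε t) (hε : ∀ t : ℕ, ε t ≤ ‖g (θ t)‖ / 4)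
    (hη0 : ∀ t : ℕ, 0 ≤ η t) (hη : ∀ t : ℕ, η t ≤ 8 / (25 * (C : ℝ))) :
    (∀ t : ℕ, L (θ (t + 1)) ≤ L (θ t)) ∧
      ∃ lstar : ℝ, Filter.Tendsto (fun t : ℕ => L (θ t)) Filter.atTop (nhds lstar) := by
  have key : ∀ t : ℕ, L (θ (t + 1)) ≤ L (θ t) := by
    intro t
    have hstep : θ (t + 1) = θ t + (-η t • s t) := by
      rw [hθ t]; module
    have hdes := descent_lemma L g hg C hLip (θ t) (-η t • s t)
    rw [← hstep] at hdes
    set G := ‖g (θ t)‖ with hG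
    have hG0 : 0 ≤ G := norm_nonneg _
    -- inner product bound
    have hinner : ⟪g (θ t), -η t • s t⟫ ≤ -(η t) * (3/4 * G^2) := by
      have hdecomp : s t = g (θ t) + (s t - g (θ t)) := by abel
      have h1 : ⟪g (θ t), s t⟫ = G^2 + ⟪g (θ t), s t - g (θ t)⟫ := by
        rw [inner_sub_right, real_inner_self_eq_norm_sq]
        ring
      have h2 : |⟪g (θ t), s t - g (θ t)⟫| ≤ G * (G/4) := by
        calc |⟪g (θ t), s t - g (θ t)⟫| ≤ G * ‖s t - g (θ t)‖ :=
              abs_real_inner_le_norm _ _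
          _ ≤ G * (G/4) := by
              gcongr
              exact (hs t).trans (hε t)
      have h3 : 3/4 * G^2 ≤ ⟪g (θ t), s t⟫ := by
        have := abs_le.1 h2
        nlinarith
      rw [inner_smul_right]
      have := mul_le_mul_of_nonneg_left h3 (hη0 t)
      nlinarith
    -- norm bound
    have hnorm : ‖(-η t • s t : E)‖^2 ≤ (η t)^2 * (25/16 * G^2) := by
      have hst : ‖s t‖ ≤ 5/4 * G := by
        calc ‖s t‖ = ‖g (θ t) + (s t - g (θ t))‖ := by congr 1; abel
          _ ≤ G + ‖s t - g (θ t)‖ := norm_add_le _ _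
          _ ≤ G + G/4 := by
              gcongr; exact (hs t).trans (hε t)
          _ = 5/4 * G := by ring
      have : ‖(-η t • s t : E)‖ = η t * ‖s t‖ := by
        rw [norm_smul, Real.norm_eq_abs, abs_neg, abs_of_nonneg (hη0 t)]
      rw [this]
      have h4 := mul_self_le_mul_self (norm_nonneg (s t)) hst
      nlinarith [sq_nonneg (η t), h4]
    have hηC : (C : ℝ) * η t ≤ 8/25 := by
      have h := hη t
      rw [le_div_iff₀ (by positivity : (0:ℝ) < 25 * (C:ℝ))] at h
      nlinarith [hC]
    have hCb : (C : ℝ)/2 * ‖(-η t • s t : E)‖^2 ≤ η t * G^2 / 4 := by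
      calc (C : ℝ)/2 * ‖(-η t • s t : E)‖^2 ≤ (C : ℝ)/2 * ((η t)^2 * (25/16 * G^2)) := by
            gcongr
        _ = (25/32) * ((C : ℝ) * η t) * (η t * G^2) := by ring
        _ ≤ (25/32) * (8/25) * (η t * G^2) := by
            have hηG : 0 ≤ η t * G^2 := mul_nonneg (hη0 t) (sq_nonneg G)
            nlinarith [hηC, hηG]
        _ ≤ η t * G^2 / 4 := by nlinarith [hη0 t, hG0]
    nlinarith [hinner, hCb, hdes, mul_nonneg (hη0 t) (sq_nonneg G)]
  refine ⟨key, ?_⟩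
  have hanti : Antitone (fun t : ℕ => L (θ t)) := antitone_nat_of_succ_le key
  have hbdd : BddBelow (Set.range (fun t : ℕ => L (θ t))) :=
    ⟨B, by rintro x ⟨t, rfl⟩; exact hB _⟩
  exact ⟨_, tendsto_atTop_ciInf hanti hbdd⟩
end
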